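/- Let X = diag(λ, μ, −λ−μ) with λ, μ, −λ−μ pairwise distinct, and Y = !![α,γ,δ; γ,β,ε; δ,ε,−α−β]. Then the span of X and Y is a generic 2-dimensional subspace of 𝔭 (i.e. [𝔰𝔬(3),X] + span{X,Y} = 𝔭) if and only if αμ − βλ ≠ 0. -/

import Mathlib

open Matrix

set_option maxHeartbeats 2000000 in
theorem stmt17 (l μ α β γ δ ε : ℝ)
    (h1 : l ≠ μ) (h2 : l ≠ -l - μ) (h3 : μ ≠ -l - μ) :
    ({P : Matrix (Fin 3) (Fin 3) ℝ |
        ∃ (U : Matrix (Fin 3) (Fin 3) ℝ) (a b : ℝ), Uᵀ = -U ∧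
          P = (U * !![l, 0, 0; 0, μ, 0; 0, 0, -l - μ]
              - !![l, 0, 0; 0, μ, 0; 0, 0, -l - μ] * U)
            + a • !![l, 0, 0; 0, μ, 0; 0, 0, -l - μ]
            + b • !![α, γ, δ; γ, β, ε; δ, ε, -α - β]}
      = {P : Matrix (Fin 3) (Fin 3) ℝ | Pᵀ = P ∧ P.trace = 0}) ↔
    α * μ - β * l ≠ 0 := by
  have hml : μ - l ≠ 0 := sub_ne_zero.mpr (Ne.symm h1)
  have h2l : 2*l + μ ≠ 0 := by intro h; apply h2; linarith
  have h2m : l + 2*μ ≠ 0 := by intro h; apply h3; linarith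
  constructor
  · intro hset hαβ
    have hP : (!![-μ,0,0;0,l,0;0,0,μ-l] : Matrix (Fin 3) (Fin 3) ℝ) ∈
        {P : Matrix (Fin 3) (Fin 3) ℝ | Pᵀ = P ∧ P.trace = 0} := by
      constructor
      · ext i j; fin_cases i <;> fin_cases j <;> simp [Matrix.vecHead, Matrix.vecTail]
      · simp [Matrix.trace_fin_three]
    rw [← hset] at hP
    obtain ⟨U, a, b, hU, hPe⟩ := hP
    have h00 := congrFun (congrFun hPe 0) 0
    have h11 := congrFun (congrFun hPe 1) 1
    simp [Matrix.mul_apply, Matrix.vecMul, dotProduct, Matrix.vecHead, Matrix.vecTail, Fin.sum_univ_three] at h00 h11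
    have key : l^2 + μ^2 = 0 := by linear_combination l * h11 - μ * h00 - b * hαβ
    have hl : l = 0 := by nlinarith [sq_nonneg l, sq_nonneg μ]
    have hm : μ = 0 := by nlinarith [sq_nonneg l, sq_nonneg μ]
    exact h1 (by rw [hl, hm])
  · intro hd
    have hD : l*β - μ*α ≠ 0 := by intro h; apply hd; linarith
    ext P
    simp only [Set.mem_setOf_eq]
    constructor
    · rintro ⟨U, a, b, hU, rfl⟩
      have u01 : U 1 0 = -U 0 1 := by
        have := congrFun (congrFun hU 0) 1; simpa using this
      have u02 : U 2 0 = -U 0 2 := by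
        have := congrFun (congrFun hU 0) 2; simpa using this
      have u12 : U 2 1 = -U 1 2 := by
        have := congrFun (congrFun hU 1) 2; simpa using this
      have u00 : U 0 0 = 0 := by
        have := congrFun (congrFun hU 0) 0; simp at this; linarith
      have u11 : U 1 1 = 0 := by
        have := congrFun (congrFun hU 1) 1; simp at this; linarith
      have u22 : U 2 2 = 0 := by
        have := congrFun (congrFun hU 2) 2; simp at this; linarith
      constructor
      · ext i j
        fin_cases i <;> fin_cases j <;>
          simp [Matrix.mul_apply, Matrix.vecMul, dotProduct, Matrix.vecHead, Matrix.vecTail, Fin.sum_univ_three, u01, u02, u12, u00, u11, u22] <;> ring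
      · simp [Matrix.trace_fin_three, Matrix.mul_apply, Matrix.vecMul, dotProduct, Matrix.vecHead, Matrix.vecTail, Fin.sum_univ_three]
        ring
    · rintro ⟨hPT, hPtr⟩
      have e10 : P 1 0 = P 0 1 := by
        have := congrFun (congrFun hPT 0) 1; simpa using this
      have e20 : P 2 0 = P 0 2 := by
        have := congrFun (congrFun hPT 0) 2; simpa using this
      have e21 : P 2 1 = P 1 2 := by
        have := congrFun (congrFun hPT 1) 2; simpa using this
      have htr : P 0 0 + P 1 1 + P 2 2 = 0 := by
        simpa [Matrix.trace_fin_three] using hPtr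
      have h22 : P 2 2 = -P 0 0 - P 1 1 := by linarith
      set D := l*β - μ*α with hDdef
      set a := (β * P 0 0 - α * P 1 1)/D with ha
      set b := (l * P 1 1 - μ * P 0 0)/D with hb
      set u := (P 0 1 - b*γ)/(μ - l) with hu
      set v := (b*δ - P 0 2)/(2*l + μ) with hv
      set w := (b*ε - P 1 2)/(l + 2*μ) with hw
      have hD2 : l*β - μ*α ≠ 0 := by intro h; exact hd (by linarith)
      have hD3 : β*l - α*μ ≠ 0 := by intro h; exact hd (by linarith)
      have h2l' : l*2 + μ ≠ 0 := by intro h; exact h2l (by linarith)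
      have h2m' : l + μ*2 ≠ 0 := by intro h; exact h2m (by linarith)
      have hml' : -l + μ ≠ 0 := by intro h; exact hml (by linarith)
      refine ⟨!![0,u,v;-u,0,w;-v,-w,0], a, b, ?_, ?_⟩
      · ext i j; fin_cases i <;> fin_cases j <;> simp [Matrix.vecHead, Matrix.vecTail]
      · ext i j
        fin_cases i <;> fin_cases j <;>
          simp only [Matrix.mul_apply, Matrix.sub_apply, Matrix.add_apply, Matrix.smul_apply,
            Fin.sum_univ_three, smul_eq_mul] <;>
          simp [Matrix.vecHead, Matrix.vecTail, e10, e20, e21, h22] <;>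
          simp only [hu, hv, hw, ha, hb, hDdef] <;> field_simp [hml, h2l, h2m, hD2, hD3, h2l', h2m', hml'] <;> ring
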